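/- Let R := (1/√2) · [[1,0,0,1],[0,1,1,0],[0,−1,1,0],[−1,0,0,1]] (the Ising solution). Then: (a) R satisfies the Yang–Baxter equation; (b) R is a real orthogonal (hence unitary) matrix; and (c) R is simple as a Yang–Baxter object: there is no nonzero vector v ∈ ℂ² and scalar λ with R(v ⊗ v) = λ(v ⊗ v), and likewise no nonzero v and λ with Rᵀ(v ⊗ v) = λ(v ⊗ v). -/

import Mathlib

open Matrix Kronecker

/-- `R ⊗ₖ 1`, viewed as a matrix indexed by `ι × ι × ι` via the canonical
associativity reindexing. -/
def ybL {ι : Type*} [DecidableEq ι] (R : Matrix (ι × ι) (ι × ι) ℂ) :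
    Matrix (ι × ι × ι) (ι × ι × ι) ℂ :=
  Matrix.reindex (Equiv.prodAssoc ι ι ι) (Equiv.prodAssoc ι ι ι)
    (R ⊗ₖ (1 : Matrix ι ι ℂ))

/-- `1 ⊗ₖ R`, indexed by `ι × ι × ι`. -/
def ybR {ι : Type*} [DecidableEq ι] (R : Matrix (ι × ι) (ι × ι) ℂ) :
    Matrix (ι × ι × ι) (ι × ι × ι) ℂ :=
  (1 : Matrix ι ι ℂ) ⊗ₖ R

/-- The (constant) Yang–Baxter equation. -/
def SatisfiesYBE {ι : Type*} [Fintype ι] [DecidableEq ι]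
    (R : Matrix (ι × ι) (ι × ι) ℂ) : Prop :=
  ybL R * ybR R * ybL R = ybR R * ybL R * ybR R


/-- The Ising Yang–Baxter operator
`(1/√2) · [[1,0,0,1],[0,1,1,0],[0,−1,1,0],[−1,0,0,1]]` in the ordered basis
`|11⟩, |21⟩, |12⟩, |22⟩` (indexed by `Fin 2 × Fin 2`). -/
noncomputable def ising : Matrix (Fin 2 × Fin 2) (Fin 2 × Fin 2) ℂ :=
  (1 / (Real.sqrt 2 : ℂ)) • Matrix.of fun r c =>
    if r = ((0, 0) : Fin 2 × Fin 2) ∧ c = ((0, 0) : Fin 2 × Fin 2) then 1 else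
    if r = ((0, 0) : Fin 2 × Fin 2) ∧ c = ((1, 1) : Fin 2 × Fin 2) then 1 else
    if r = ((1, 0) : Fin 2 × Fin 2) ∧ c = ((1, 0) : Fin 2 × Fin 2) then 1 else
    if r = ((1, 0) : Fin 2 × Fin 2) ∧ c = ((0, 1) : Fin 2 × Fin 2) then 1 else
    if r = ((0, 1) : Fin 2 × Fin 2) ∧ c = ((1, 0) : Fin 2 × Fin 2) then -1 else
    if r = ((0, 1) : Fin 2 × Fin 2) ∧ c = ((0, 1) : Fin 2 × Fin 2) then 1 else
    if r = ((1, 1) : Fin 2 × Fin 2) ∧ c = ((0, 0) : Fin 2 × Fin 2) then -1 else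
    if r = ((1, 1) : Fin 2 × Fin 2) ∧ c = ((1, 1) : Fin 2 × Fin 2) then 1 else 0

def Mzi : Matrix (Fin 2 × Fin 2) (Fin 2 × Fin 2) ℤ :=
  Matrix.of fun r c =>
    if r = ((0, 0) : Fin 2 × Fin 2) ∧ c = ((0, 0) : Fin 2 × Fin 2) then 1 else
    if r = ((0, 0) : Fin 2 × Fin 2) ∧ c = ((1, 1) : Fin 2 × Fin 2) then 1 else
    if r = ((1, 0) : Fin 2 × Fin 2) ∧ c = ((1, 0) : Fin 2 × Fin 2) then 1 else
    if r = ((1, 0) : Fin 2 × Fin 2) ∧ c = ((0, 1) : Fin 2 × Fin 2) then 1 else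
    if r = ((0, 1) : Fin 2 × Fin 2) ∧ c = ((1, 0) : Fin 2 × Fin 2) then -1 else
    if r = ((0, 1) : Fin 2 × Fin 2) ∧ c = ((0, 1) : Fin 2 × Fin 2) then 1 else
    if r = ((1, 1) : Fin 2 × Fin 2) ∧ c = ((0, 0) : Fin 2 × Fin 2) then -1 else
    if r = ((1, 1) : Fin 2 × Fin 2) ∧ c = ((1, 1) : Fin 2 × Fin 2) then 1 else 0

def Lzi : Matrix (Fin 2 × Fin 2 × Fin 2) (Fin 2 × Fin 2 × Fin 2) ℤ :=
  Matrix.reindex (Equiv.prodAssoc _ _ _) (Equiv.prodAssoc _ _ _)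
    (Mzi ⊗ₖ (1 : Matrix (Fin 2) (Fin 2) ℤ))

def Rzi : Matrix (Fin 2 × Fin 2 × Fin 2) (Fin 2 × Fin 2 × Fin 2) ℤ :=
  (1 : Matrix (Fin 2) (Fin 2) ℤ) ⊗ₖ Mzi

lemma Mzi_ybe : Lzi * Rzi * Lzi = Rzi * Lzi * Rzi := by decide

noncomputable def sC : ℂ := 1 / (Real.sqrt 2 : ℂ)

lemma sC_ne : sC ≠ 0 := by
  have h : Real.sqrt 2 ≠ 0 := by positivity
  simp [sC, Complex.ofReal_ne_zero, h]

lemma ising_eq : ising = sC • (Mzi.map (Int.cast : ℤ → ℂ)) := by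
  ext p q
  simp only [ising, sC, Mzi, Matrix.smul_apply, Matrix.map_apply, Matrix.of_apply,
    apply_ite (Int.cast : ℤ → ℂ)]
  norm_num

lemma ybL_ising : ybL ising = sC • (Lzi.map (Int.cast : ℤ → ℂ)) := by
  rw [ising_eq]
  ext ⟨a, b, c⟩ ⟨d, e, g⟩
  simp [ybL, Lzi, Matrix.kroneckerMap_apply, Matrix.one_apply, Matrix.map_apply,
    apply_ite (Int.cast : ℤ → ℂ), mul_ite, mul_zero, mul_one]

lemma ybR_ising : ybR ising = sC • (Rzi.map (Int.cast : ℤ → ℂ)) := by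
  rw [ising_eq]
  ext ⟨a, b, c⟩ ⟨d, e, g⟩
  simp [ybR, Rzi, Matrix.kroneckerMap_apply, Matrix.one_apply, Matrix.map_apply,
    apply_ite (Int.cast : ℤ → ℂ), ite_mul, zero_mul, one_mul, mul_comm]

lemma ising_ybe : SatisfiesYBE ising := by
  unfold SatisfiesYBE
  rw [ybL_ising, ybR_ising]
  have hmap : ∀ A B : Matrix (Fin 2 × Fin 2 × Fin 2) (Fin 2 × Fin 2 × Fin 2) ℤ,
      (A.map (Int.cast : ℤ → ℂ)) * (B.map (Int.cast : ℤ → ℂ)) = (A * B).map (Int.cast : ℤ → ℂ) :=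
    fun A B => (Matrix.map_mul (f := Int.castRingHom ℂ)).symm
  simp only [Matrix.smul_mul, Matrix.mul_smul, hmap, Mzi_ybe]

lemma ising_im : ∀ p q : Fin 2 × Fin 2, (ising p q).im = 0 := by
  intro p q
  simp only [ising_eq, Matrix.smul_apply, Matrix.map_apply, smul_eq_mul, sC, Complex.mul_im]
  simp [Complex.div_im]

lemma key2 : sC * sC * 2 = 1 := by
  have h : (Real.sqrt 2 : ℂ) * (Real.sqrt 2 : ℂ) = 2 := by
    norm_cast
    exact Real.mul_self_sqrt (by norm_num)
  have h0 : (Real.sqrt 2 : ℂ) ≠ 0 := by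
    simpa using (Real.sqrt_ne_zero'.mpr (by norm_num : (0:ℝ) < 2))
  unfold sC
  rw [div_mul_div_comm, one_mul, h]; norm_num

lemma Mzi_orth : Mzi * Mziᵀ = (2:ℤ) • 1 := by decide

lemma ising_orth : ising * isingᵀ = 1 := by
  rw [ising_eq]
  have ht : (Mzi.map (Int.cast : ℤ → ℂ))ᵀ = Mziᵀ.map (Int.cast : ℤ → ℂ) := by
    ext p q; simp [Matrix.transpose_apply, Matrix.map_apply]
  have hmap : Mzi.map (Int.cast : ℤ → ℂ) * Mziᵀ.map (Int.cast : ℤ → ℂ)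
      = (Mzi * Mziᵀ).map (Int.cast : ℤ → ℂ) := (Matrix.map_mul (f := Int.castRingHom ℂ)).symm
  rw [Matrix.transpose_smul, ht, Matrix.smul_mul, Matrix.mul_smul, smul_smul, hmap, Mzi_orth]
  ext p q
  simp only [Matrix.map_apply, Matrix.smul_apply, Matrix.one_apply]
  by_cases hpq : p = q <;> simp [hpq]
  linear_combination key2

lemma isingH_eq : isingᴴ = isingᵀ := by
  ext p q
  simpa [Matrix.conjTranspose_apply, Matrix.transpose_apply] using
    Complex.conj_eq_iff_im.mpr (ising_im q p)

lemma two_sC_ne : (2 : ℂ) * sC ≠ 0 := mul_ne_zero two_ne_zero sC_ne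

lemma no_right_eig : ¬ ∃ (v : Fin 2 → ℂ) (lam : ℂ), v ≠ 0 ∧
    ising.mulVec (fun p => v p.1 * v p.2) = lam • fun p : Fin 2 × Fin 2 => v p.1 * v p.2 := by
  rintro ⟨v, lam, hv, h⟩
  have e1 := congrFun h (0,0)
  have e2 := congrFun h (1,0)
  have e3 := congrFun h (0,1)
  have e4 := congrFun h (1,1)
  simp only [ising_eq, Matrix.mulVec, dotProduct, Fintype.sum_prod_type,
    Fin.sum_univ_two, Matrix.smul_apply, Matrix.map_apply, Mzi, Matrix.of_apply,
    Pi.smul_apply, smul_eq_mul] at e1 e2 e3 e4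
  norm_num [Prod.ext_iff, Prod.fst_zero, Prod.snd_zero, Fin.ext_iff] at e1 e2 e3 e4
  have hab : v 0 * v 1 = 0 := by
    have h2 : (2 * sC) * (v 0 * v 1) = 0 := by linear_combination e2 - e3
    exact (mul_eq_zero.mp h2).resolve_left two_sC_ne
  have hvz : v 0 = 0 ∧ v 1 = 0 := by
    rcases mul_eq_zero.mp hab with h0 | h1
    · refine ⟨h0, ?_⟩
      have hs : sC * (v 1 * v 1) = 0 := by
        rw [h0] at e1; linear_combination e1
      exact mul_self_eq_zero.mp ((mul_eq_zero.mp hs).resolve_left sC_ne)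
    · refine ⟨?_, h1⟩
      have hs : sC * (v 0 * v 0) = 0 := by
        rw [h1] at e4; linear_combination -e4
      exact mul_self_eq_zero.mp ((mul_eq_zero.mp hs).resolve_left sC_ne)
  exact hv (funext fun i => by fin_cases i <;> simp [hvz.1, hvz.2])

lemma no_left_eig : ¬ ∃ (v : Fin 2 → ℂ) (lam : ℂ), v ≠ 0 ∧
    isingᵀ.mulVec (fun p => v p.1 * v p.2) = lam • fun p : Fin 2 × Fin 2 => v p.1 * v p.2 := by
  rintro ⟨v, lam, hv, h⟩
  have e1 := congrFun h (0,0)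
  have e2 := congrFun h (1,0)
  have e3 := congrFun h (0,1)
  have e4 := congrFun h (1,1)
  simp only [ising_eq, Matrix.mulVec, dotProduct, Fintype.sum_prod_type,
    Fin.sum_univ_two, Matrix.transpose_apply, Matrix.smul_apply, Matrix.map_apply, Mzi,
    Matrix.of_apply, Pi.smul_apply, smul_eq_mul] at e1 e2 e3 e4
  norm_num [Prod.ext_iff, Prod.fst_zero, Prod.snd_zero, Fin.ext_iff] at e1 e2 e3 e4
  have hab : v 0 * v 1 = 0 := by
    have h2 : (2 * sC) * (v 0 * v 1) = 0 := by linear_combination e3 - e2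
    exact (mul_eq_zero.mp h2).resolve_left two_sC_ne
  have hvz : v 0 = 0 ∧ v 1 = 0 := by
    rcases mul_eq_zero.mp hab with h0 | h1
    · refine ⟨h0, ?_⟩
      have hs : sC * (v 1 * v 1) = 0 := by
        rw [h0] at e1; linear_combination -e1
      exact mul_self_eq_zero.mp ((mul_eq_zero.mp hs).resolve_left sC_ne)
    · refine ⟨?_, h1⟩
      have hs : sC * (v 0 * v 0) = 0 := by
        rw [h1] at e4; linear_combination e4
      exact mul_self_eq_zero.mp ((mul_eq_zero.mp hs).resolve_left sC_ne)
  exact hv (funext fun i => by fin_cases i <;> simp [hvz.1, hvz.2])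

/-- the Ising solution (a) satisfies the Yang–Baxter equation,
(b) is real orthogonal (hence unitary), and (c) is simple as a Yang–Baxter
object: `R` has no (right or left) eigenvector of the form `v ⊗ v` with
`v ≠ 0`. -/
theorem ising_ybe_unitary_simple :
    SatisfiesYBE ising ∧
    ((∀ p q : Fin 2 × Fin 2, (ising p q).im = 0) ∧
      ising * isingᵀ = 1 ∧ ising * isingᴴ = 1) ∧
    (¬ ∃ (v : Fin 2 → ℂ) (lam : ℂ), v ≠ 0 ∧
        ising.mulVec (fun p => v p.1 * v p.2) = lam • fun p : Fin 2 × Fin 2 => v p.1 * v p.2) ∧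
    (¬ ∃ (v : Fin 2 → ℂ) (lam : ℂ), v ≠ 0 ∧
        isingᵀ.mulVec (fun p => v p.1 * v p.2)
          = lam • fun p : Fin 2 × Fin 2 => v p.1 * v p.2) := by
  exact ⟨ising_ybe, ⟨ising_im, ising_orth, by rw [isingH_eq]; exact ising_orth⟩,
    no_right_eig, no_left_eig⟩
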